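/- arXiv:1712.00875 — 2 statements merged into one kernel-verified Lean document; each statement's English description precedes it below -/
import Mathlib

section
/- Let G be a locally finite weighted graph and x ≠ y vertices with κ(x,y) > 0. Then d(x,y) ≤ (Deg(x) + Deg(y))/κ(x,y). Consequently, if Deg(x) ≤ M for all x and Ric(G) ≥ K > 0, then diam(G) ≤ 2M/K. -/
open scoped BigOperators

/-- A locally finite weighted graph. -/
structure WeightedGraph (V : Type) where
  w : V → V → ℝ
  m : V → ℝ
  symm : ∀ x y, w x y = w y x
  loopless : ∀ x, w x x = 0
  nonneg : ∀ x y, 0 ≤ w x y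
  mpos : ∀ x, 0 < m x
  locFin : ∀ x, Set.Finite {y | w x y ≠ 0}

namespace WeightedGraph

variable {V : Type} (G : WeightedGraph V)

/-- The underlying simple graph. -/
def toSimple : SimpleGraph V where
  Adj x y := x ≠ y ∧ G.w x y ≠ 0
  symm := ⟨by
    intro x y h
    exact ⟨h.1.symm, by rw [G.symm y x]; exact h.2⟩⟩
  loopless := ⟨by intro x h; exact h.1 rfl⟩

/-- The combinatorial graph distance. -/
noncomputable def dist (x y : V) : ℕ := G.toSimple.dist x y

/-- The graph Laplacian. -/
noncomputable def lap (f : V → ℝ) (x : V) : ℝ :=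
  (∑ᶠ y, G.w x y * (f y - f x)) / G.m x

/-- The weighted vertex degree. -/
noncomputable def deg (x : V) : ℝ := (∑ᶠ y, G.w x y) / G.m x

/-- `f` is `1`-Lipschitz with respect to the combinatorial distance. -/
def Lip1 (f : V → ℝ) : Prop := ∀ x y, |f x - f y| ≤ (G.dist x y : ℝ)

/-- The Ollivier curvature, via the limit-free formula
`κ(x,y) = inf {∇_{xy} Δ f : f ∈ Lip(1) ∩ C_c(V), ∇_{yx} f = 1}`. -/
noncomputable def curv (x y : V) : ℝ :=
  sInf { c | ∃ f : V → ℝ, G.Lip1 f ∧ (Function.support f).Finite ∧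
    f y - f x = (G.dist x y : ℝ) ∧ c = (G.lap f x - G.lap f y) / (G.dist x y : ℝ) }

end WeightedGraph

namespace WGaux

/-- Balls are finite in a locally finite connected graph. -/
theorem ball_finite {V : Type} (H : SimpleGraph V) (hconn : H.Connected)
    (hloc : ∀ v : V, (H.neighborSet v).Finite) (x : V) :
    ∀ n : ℕ, Set.Finite {z : V | H.dist x z ≤ n} := by
  intro n
  induction n with
  | zero =>
      refine Set.Finite.subset (Set.finite_singleton x) ?_
      intro z hz
      simp only [Set.mem_setOf_eq, Nat.le_zero] at hz
      have : x = z := (hconn.dist_eq_zero_iff).mp hz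
      simp [this]
  | succ n ih =>
      have hsub : {z : V | H.dist x z ≤ n + 1} ⊆
          {z : V | H.dist x z ≤ n} ∪ ⋃ w ∈ {z : V | H.dist x z ≤ n}, H.neighborSet w := by
        intro z hz
        simp only [Set.mem_setOf_eq] at hz
        by_cases hzn : H.dist x z ≤ n
        · exact Or.inl hzn
        have hr : H.Reachable x z := hconn x z
        obtain ⟨p, hp⟩ := hr.exists_walk_length_eq_dist
        right
        cases hpr : p.reverse with
        | nil =>
            exfalso
            simp [SimpleGraph.dist_self] at hzn
        | cons h q =>
            rename_i a
            refine Set.mem_biUnion (show H.dist x a ≤ n from ?_) (H.adj_symm h)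
            have hq : q.reverse.length = p.length - 1 := by
              have hl := congrArg SimpleGraph.Walk.length hpr
              simp at hl
              simp [hl]
            have hd := H.dist_le q.reverse
            rw [hq, hp] at hd
            omega
      exact Set.Finite.subset (ih.union (ih.biUnion fun w _ => hloc w)) hsub

theorem abs_min_sub_min_le {a b c : ℝ} : |min a c - min b c| ≤ |a - b| := by
  have key : ∀ u v : ℝ, min u c - min v c ≤ |u - v| := by
    intro u v
    have h1 : min u c ≤ |u - v| + min v c := by
      rcases le_total v c with h | h
      · calc min u c ≤ u := min_le_left _ _
          _ ≤ |u - v| + v := by have := le_abs_self (u - v); linarith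
          _ = |u - v| + min v c := by rw [min_eq_left h]
      · calc min u c ≤ c := min_le_right _ _
          _ ≤ |u - v| + c := by have := abs_nonneg (u - v); linarith
          _ = |u - v| + min v c := by rw [min_eq_right h]
    linarith
  rw [abs_sub_le_iff]
  refine ⟨key a b, ?_⟩
  have := key b a
  rwa [abs_sub_comm] at this

end WGaux

/-- If `κ(x,y) > 0` then `d(x,y) ≤ (Deg(x) + Deg(y))/κ(x,y)`; consequently, if `Deg ≤ M` and
`Ric(G) ≥ K > 0` then `diam(G) ≤ 2M/K`. -/
theorem stmt17 {V : Type} [Countable V] (G : WeightedGraph V)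
    (hconn : G.toSimple.Connected) :
    (∀ x y, x ≠ y → 0 < G.curv x y →
      (G.dist x y : ℝ) ≤ (G.deg x + G.deg y) / G.curv x y) ∧
    (∀ M K : ℝ, (∀ x, G.deg x ≤ M) → 0 < K → (∀ x y, x ≠ y → K ≤ G.curv x y) →
      ∀ x y, (G.dist x y : ℝ) ≤ 2 * M / K) := by
  have hnbr : ∀ v : V, (G.toSimple.neighborSet v).Finite := by
    intro v
    exact (G.locFin v).subset (fun z hz => hz.2)
  have hdeg_nonneg : ∀ v : V, 0 ≤ G.deg v := by
    intro v
    exact div_nonneg (finsum_nonneg (fun z => G.nonneg v z)) (G.mpos v).le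
  have main : ∀ x y, x ≠ y → 0 < G.curv x y →
      (G.dist x y : ℝ) ≤ (G.deg x + G.deg y) / G.curv x y := by
    intro x y hxy hκ
    set D : ℕ := G.dist x y with hDdef
    have hDpos : 0 < D := hconn.pos_dist_of_ne hxy
    have hDR : (0 : ℝ) < (D : ℝ) := by exact_mod_cast hDpos
    set f : V → ℝ := fun z => min (G.dist x z : ℝ) (D : ℝ) - (D : ℝ) with hfdef
    have hfx : f x = -(D : ℝ) := by
      simp [hfdef, WeightedGraph.dist, SimpleGraph.dist_self]
    have hfy : f y = 0 := by simp [hfdef, ← hDdef]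
    -- triangle inequality for dist, cast to ℝ
    have htri : ∀ a b : V, (G.dist x a : ℝ) ≤ (G.dist x b : ℝ) + (G.dist a b : ℝ) := by
      intro a b
      have h := hconn.dist_triangle (u := x) (v := b) (w := a)
      have hc : G.toSimple.dist b a = G.toSimple.dist a b := SimpleGraph.dist_comm
      rw [hc] at h
      unfold WeightedGraph.dist
      exact_mod_cast h
    -- f is 1-Lipschitz
    have hlip : G.Lip1 f := by
      intro a b
      have h1 : |f a - f b| ≤ |(G.dist x a : ℝ) - (G.dist x b : ℝ)| := by
        simpa [hfdef, sub_sub_sub_cancel_right] using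
          WGaux.abs_min_sub_min_le (a := (G.dist x a : ℝ)) (b := (G.dist x b : ℝ)) (c := (D : ℝ))
      refine h1.trans ?_
      rw [abs_sub_le_iff]
      constructor
      · have := htri a b
        linarith
      · have h2 := htri b a
        have hc : (G.dist b a : ℝ) = (G.dist a b : ℝ) := by
          unfold WeightedGraph.dist
          norm_cast
          exact SimpleGraph.dist_comm
        linarith
    -- finite support
    have hsupp : (Function.support f).Finite := by
      refine (WGaux.ball_finite G.toSimple hconn hnbr x D).subset ?_
      intro z hz
      simp only [Set.mem_setOf_eq]
      by_contra hle
      push_neg at hle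
      have h2 : (D : ℝ) ≤ (G.dist x z : ℝ) := by exact_mod_cast hle.le
      have : f z = 0 := by simp [hfdef, min_eq_right h2]
      exact hz this
    have hgrad : f y - f x = (D : ℝ) := by rw [hfx, hfy]; ring
    have hmem : (G.lap f x - G.lap f y) / (D : ℝ) ∈
        { c | ∃ g : V → ℝ, G.Lip1 g ∧ (Function.support g).Finite ∧
          g y - g x = (G.dist x y : ℝ) ∧ c = (G.lap g x - G.lap g y) / (G.dist x y : ℝ) } :=
      ⟨f, hlip, hsupp, hgrad, rfl⟩
    have hbdd : BddBelow { c | ∃ g : V → ℝ, G.Lip1 g ∧ (Function.support g).Finite ∧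
          g y - g x = (G.dist x y : ℝ) ∧ c = (G.lap g x - G.lap g y) / (G.dist x y : ℝ) } := by
      by_contra hb
      have h0 : G.curv x y = 0 := Real.sInf_of_not_bddBelow hb
      rw [h0] at hκ
      exact lt_irrefl _ hκ
    have hcurv_le : G.curv x y ≤ (G.lap f x - G.lap f y) / (D : ℝ) := csInf_le hbdd hmem
    -- dist x z ≤ 1 for neighbors of x
    have hadj_dist : ∀ v z : V, G.w v z ≠ 0 → G.dist v z ≤ 1 := by
      intro v z hw
      by_cases hvz : v = z
      · subst hvz; rw [G.loopless v] at hw; exact absurd rfl hw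
      · have hadj : G.toSimple.Adj v z := ⟨hvz, hw⟩
        unfold WeightedGraph.dist
        rw [SimpleGraph.dist_eq_one_iff_adj.mpr hadj]
    -- bound on lap f x
    have hlapx : G.lap f x ≤ G.deg x := by
      unfold WeightedGraph.lap WeightedGraph.deg
      apply div_le_div_of_nonneg_right ?_ (G.mpos x).le
      · have hs1 : Function.support (fun z => G.w x z * (f z - f x)) ⊆ (G.locFin x).toFinset := by
          intro z hz
          simp only [Set.Finite.coe_toFinset, Set.mem_setOf_eq]
          intro hw
          apply hz
          simp [hw]
        have hs2 : Function.support (fun z => G.w x z) ⊆ (G.locFin x).toFinset := by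
          intro z hz
          simpa using hz
        rw [finsum_eq_sum_of_support_subset _ hs1, finsum_eq_sum_of_support_subset _ hs2]
        refine Finset.sum_le_sum ?_
        intro z hz
        simp only [Set.Finite.mem_toFinset, Set.mem_setOf_eq] at hz
        have hfz : f z - f x ≤ 1 := by
          rw [hfx]
          have h1 : (G.dist x z : ℝ) ≤ 1 := by exact_mod_cast hadj_dist x z hz
          have h2 : min (G.dist x z : ℝ) (D : ℝ) ≤ (G.dist x z : ℝ) := min_le_left _ _
          simp only [hfdef]
          linarith
        calc G.w x z * (f z - f x) ≤ G.w x z * 1 :=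
              mul_le_mul_of_nonneg_left hfz (G.nonneg x z)
          _ = G.w x z := mul_one _
    -- bound on lap f y
    have hlapy : -(G.deg y) ≤ G.lap f y := by
      unfold WeightedGraph.lap WeightedGraph.deg
      rw [← neg_div]
      apply div_le_div_of_nonneg_right ?_ (G.mpos y).le
      · have hs1 : Function.support (fun z => G.w y z * (f z - f y)) ⊆ (G.locFin y).toFinset := by
          intro z hz
          simp only [Set.Finite.coe_toFinset, Set.mem_setOf_eq]
          intro hw
          apply hz
          simp [hw]
        have hs2 : Function.support (fun z => -(G.w y z)) ⊆ (G.locFin y).toFinset := by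
          intro z hz
          simpa using hz
        rw [finsum_eq_sum_of_support_subset _ hs1, ← finsum_neg_distrib,
          finsum_eq_sum_of_support_subset _ hs2]
        refine Finset.sum_le_sum ?_
        intro z hz
        simp only [Set.Finite.mem_toFinset, Set.mem_setOf_eq] at hz
        have hfz : -1 ≤ f z - f y := by
          rw [hfy]
          have h1 : (D : ℝ) ≤ (G.dist x z : ℝ) + 1 := by
            have h2 := htri y z
            have h3 : (G.dist y z : ℝ) ≤ 1 := by exact_mod_cast hadj_dist y z hz
            have hc : (G.dist x y : ℝ) = (G.dist y x : ℝ) := by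
              unfold WeightedGraph.dist
              norm_cast
              exact SimpleGraph.dist_comm
            have hc2 : (G.dist z x : ℝ) = (G.dist x z : ℝ) := by
              unfold WeightedGraph.dist
              norm_cast
              exact SimpleGraph.dist_comm
            -- htri y z : dist x y ≤ dist x z + dist y z
            have := htri y z
            simp only [hDdef]
            linarith
          have h2 : (D : ℝ) - 1 ≤ min (G.dist x z : ℝ) (D : ℝ) := by
            refine le_min (by linarith) (by linarith)
          simp only [hfdef]
          linarith
        calc -(G.w y z) = G.w y z * (-1) := by ring
          _ ≤ G.w y z * (f z - f y) := mul_le_mul_of_nonneg_left hfz (G.nonneg y z)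
    -- combine
    have hκD : G.curv x y * (D : ℝ) ≤ G.deg x + G.deg y := by
      have h1 : G.curv x y ≤ (G.deg x + G.deg y) / (D : ℝ) := by
        refine hcurv_le.trans ?_
        apply div_le_div_of_nonneg_right ?_ hDR.le
        linarith
      exact (le_div_iff₀ hDR).mp h1
    rw [le_div_iff₀ hκ]
    linarith [hκD]
  refine ⟨main, ?_⟩
  intro M K hM hK hRic x y
  by_cases hxy : x = y
  · subst hxy
    have h0 : G.dist x x = 0 := by simp [WeightedGraph.dist, SimpleGraph.dist_self]
    rw [h0]
    push_cast
    have hM0 : 0 ≤ M := (hdeg_nonneg x).trans (hM x)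
    positivity
  · have hκ : 0 < G.curv x y := lt_of_lt_of_le hK (hRic x y hxy)
    refine (main x y hxy hκ).trans ?_
    have h1 : G.deg x + G.deg y ≤ 2 * M := by
      have := hM x; have := hM y; linarith
    exact div_le_div₀ (by linarith [hdeg_nonneg x, hdeg_nonneg y, hM x, hM y])
      h1 hK (hRic x y hxy)
end

section
/- Subexponential growth of λ-subharmonic functions under the heat semigroup: Let G be a locally finite weighted graph, f ≥ 0 a function with Δf ≤ λf pointwise for some λ > 0. Then P_t f ≤ e^{λt} f for all t ≥ 0, where P_t f := sup{P_t g : 0 ≤ g ≤ f, g bounded} is the extended minimal heat semigroup. -/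
open scoped BigOperators

namespace WeightedGraph

variable {V : Type} (G : WeightedGraph V)

open scoped Classical

private lemma div_le_div_aux (a b c : ℝ) (h : a ≤ b) (hc : 0 < c) : a / c ≤ b / c := by
  rw [div_eq_mul_inv, div_eq_mul_inv]
  exact mul_le_mul_of_nonneg_right h (inv_nonneg.mpr hc.le)

noncomputable def nbr (x : V) : Finset V := (G.locFin x).toFinset
lemma mem_nbr {x y : V} : y ∈ G.nbr x ↔ G.w x y ≠ 0 := by simp [nbr]
noncomputable def degS (x : V) : ℝ := ∑ y ∈ G.nbr x, G.w x y
lemma degS_nonneg (x : V) : 0 ≤ G.degS x := Finset.sum_nonneg fun y _ => G.nonneg x y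
noncomputable def dirL (s : Finset V) : ({x // x ∈ s} → ℝ) →ₗ[ℝ] ({x // x ∈ s} → ℝ) where
  toFun v x := ((∑ y : {x // x ∈ s}, G.w x.1 y.1 * v y) - G.degS x.1 * v x) / G.m x.1
  map_add' v v' := funext fun x => by
    have h : (∑ y : {x // x ∈ s}, G.w x.1 y.1 * (v y + v' y))
        = (∑ y : {x // x ∈ s}, G.w x.1 y.1 * v y) + ∑ y : {x // x ∈ s}, G.w x.1 y.1 * v' y := by
      rw [← Finset.sum_add_distrib]; exact Finset.sum_congr rfl fun y _ => by ring
    simp only [Pi.add_apply]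
    rw [h]; ring
  map_smul' c v := funext fun x => by
    have h : (∑ y : {x // x ∈ s}, G.w x.1 y.1 * (c * v y))
        = c * ∑ y : {x // x ∈ s}, G.w x.1 y.1 * v y := by
      rw [Finset.mul_sum]; exact Finset.sum_congr rfl fun y _ => by ring
    simp only [Pi.smul_apply, smul_eq_mul, RingHom.id_apply]
    rw [h]; ring
noncomputable def dirOp (s : Finset V) : ({x // x ∈ s} → ℝ) →L[ℝ] ({x // x ∈ s} → ℝ) :=
  LinearMap.toContinuousLinearMap (G.dirL s)
lemma dirOp_apply (s : Finset V) (v : {x // x ∈ s} → ℝ) (x : {x // x ∈ s}) :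
    G.dirOp s v x = ((∑ y : {x // x ∈ s}, G.w x.1 y.1 * v y) - G.degS x.1 * v x) / G.m x.1 := rfl

lemma exp_dirOp_nonneg (s : Finset V) (t : ℝ) (ht : 0 ≤ t) (v : {x // x ∈ s} → ℝ)
    (hv : ∀ x, 0 ≤ v x) (x : {x // x ∈ s}) :
    0 ≤ NormedSpace.exp (t • G.dirOp s) v x := by
  classical
  set A := G.dirOp s with hA
  set c : ℝ := ∑ z ∈ s, max (G.degS z / G.m z) 0 with hc
  have hcz : ∀ z : {x // x ∈ s}, G.degS z.1 / G.m z.1 ≤ c := by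
    intro z
    calc G.degS z.1 / G.m z.1 ≤ max (G.degS z.1 / G.m z.1) 0 := le_max_left _ _
    _ ≤ c := Finset.single_le_sum (f := fun z => max (G.degS z / G.m z) 0)
        (fun i _ => le_max_right _ _) z.2
  set B : ({x // x ∈ s} → ℝ) →L[ℝ] ({x // x ∈ s} → ℝ) := A + c • 1 with hB
  have hBpos : ∀ u : {x // x ∈ s} → ℝ, (∀ y, 0 ≤ u y) → ∀ y, 0 ≤ B u y := by
    intro u hu y
    have hBy : B u y = ((∑ z : {x // x ∈ s}, G.w y.1 z.1 * u z) - G.degS y.1 * u y) / G.m y.1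
        + c * u y := by
      simp [hB, hA, dirOp_apply, ContinuousLinearMap.add_apply, ContinuousLinearMap.smul_apply,
        ContinuousLinearMap.one_apply]
    rw [hBy]
    have hm := G.mpos y.1
    have h1 : 0 ≤ ∑ z : {x // x ∈ s}, G.w y.1 z.1 * u z :=
      Finset.sum_nonneg fun z _ => mul_nonneg (G.nonneg _ _) (hu z)
    have h2 : 0 ≤ (c - G.degS y.1 / G.m y.1) * u y :=
      mul_nonneg (sub_nonneg.mpr (hcz y)) (hu y)
    have heq : ((∑ z : {x // x ∈ s}, G.w y.1 z.1 * u z) - G.degS y.1 * u y) / G.m y.1 + c * u y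
        = (∑ z : {x // x ∈ s}, G.w y.1 z.1 * u z) / G.m y.1
          + (c - G.degS y.1 / G.m y.1) * u y := by
      field_simp
      ring
    rw [heq]
    exact add_nonneg (div_nonneg h1 hm.le) h2
  have hBn : ∀ n (u : {x // x ∈ s} → ℝ), (∀ y, 0 ≤ u y) → ∀ y, 0 ≤ (B ^ n) u y := by
    intro n
    induction n with
    | zero => intro u hu y; simpa using hu y
    | succ n ih =>
      intro u hu y
      rw [pow_succ, ContinuousLinearMap.mul_apply]
      exact ih _ (hBpos u hu) y
  have hAB : t • A = t • B + (-(t * c)) • (1 : ({x // x ∈ s} → ℝ) →L[ℝ] ({x // x ∈ s} → ℝ)) := by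
    rw [hB, smul_add, smul_smul, add_assoc, ← add_smul]
    simp
  have hcomm : Commute (t • B)
      ((-(t * c)) • (1 : ({x // x ∈ s} → ℝ) →L[ℝ] ({x // x ∈ s} → ℝ))) :=
    Commute.smul_right (Commute.one_right (t • B)) (-(t * c))
  have hsplit : NormedSpace.exp (t • A)
      = Real.exp (-(t * c)) • NormedSpace.exp (t • B) := by
    letI : NormedAlgebra ℚ (({x // x ∈ s} → ℝ) →L[ℝ] ({x // x ∈ s} → ℝ)) :=
      NormedAlgebra.restrictScalars ℚ ℝ _
    rw [hAB, NormedSpace.exp_add_of_commute hcomm]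
    have h1 : ((-(t * c)) • (1 : ({x // x ∈ s} → ℝ) →L[ℝ] ({x // x ∈ s} → ℝ)))
        = algebraMap ℝ _ (-(t * c)) := (Algebra.algebraMap_eq_smul_one _).symm
    rw [h1, ← NormedSpace.algebraMap_exp_comm, ← Real.exp_eq_exp_ℝ,
      Algebra.algebraMap_eq_smul_one, mul_smul_comm, mul_one]
  rw [hsplit]
  have hle : 0 ≤ NormedSpace.exp (t • B) v x := by
    set Φ : (({x // x ∈ s} → ℝ) →L[ℝ] ({x // x ∈ s} → ℝ)) →L[ℝ] ℝ :=
      (ContinuousLinearMap.proj x).comp ((ContinuousLinearMap.apply ℝ ({x // x ∈ s} → ℝ)) v)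
      with hΦdef
    have hΦ : ∀ M : ({x // x ∈ s} → ℝ) →L[ℝ] ({x // x ∈ s} → ℝ), Φ M = M v x := fun M => rfl
    have hsum := NormedSpace.expSeries_summable' (𝕂 := ℝ) (t • B)
    have htsum : Φ (NormedSpace.exp (t • B)) = ∑' n : ℕ, Φ ((n.factorial⁻¹ : ℝ) • (t • B) ^ n) := by
      rw [NormedSpace.exp_eq_tsum ℝ]
      exact Φ.map_tsum hsum
    rw [← hΦ, htsum]
    apply tsum_nonneg
    intro n
    rw [hΦ]
    have hpow : (t • B) ^ n = t ^ n • B ^ n := smul_pow t B n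
    rw [hpow]
    simp only [ContinuousLinearMap.smul_apply, Pi.smul_apply, smul_eq_mul]
    have := hBn n v hv x
    positivity
  simp only [ContinuousLinearMap.smul_apply, Pi.smul_apply, smul_eq_mul]
  exact mul_nonneg (Real.exp_nonneg _) hle

lemma exp_dirOp_mono (s : Finset V) (t : ℝ) (ht : 0 ≤ t) (v v' : {x // x ∈ s} → ℝ)
    (hvv' : ∀ x, v x ≤ v' x) (x : {x // x ∈ s}) :
    NormedSpace.exp (t • G.dirOp s) v x ≤ NormedSpace.exp (t • G.dirOp s) v' x := by
  have h := G.exp_dirOp_nonneg s t ht (v' - v) (fun y => sub_nonneg.mpr (hvv' y)) x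
  rw [map_sub] at h
  simp only [Pi.sub_apply] at h
  linarith

lemma exp_dirOp_hasDerivAt (s : Finset V) (v : {x // x ∈ s} → ℝ) (x : {x // x ∈ s}) (t : ℝ) :
    HasDerivAt (fun τ : ℝ => NormedSpace.exp (τ • G.dirOp s) v x)
      ((G.dirOp s) (NormedSpace.exp (t • G.dirOp s) v) x) t := by
  set A := G.dirOp s with hA
  have h := hasDerivAt_exp_smul_const' (𝕂 := ℝ) A t
  set Φ : (({x // x ∈ s} → ℝ) →L[ℝ] ({x // x ∈ s} → ℝ)) →L[ℝ] ℝ :=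
    (ContinuousLinearMap.proj x).comp ((ContinuousLinearMap.apply ℝ ({x // x ∈ s} → ℝ)) v)
    with hΦdef
  have h2 := Φ.hasFDerivAt.comp_hasDerivAt t h
  have hval : Φ (A * NormedSpace.exp (t • A)) = (A (NormedSpace.exp (t • A) v)) x := rfl
  rw [hval] at h2
  exact h2

lemma exp_dirOp_continuous (s : Finset V) (v : {x // x ∈ s} → ℝ) (x : {x // x ∈ s}) :
    Continuous (fun τ : ℝ => NormedSpace.exp (τ • G.dirOp s) v x) :=
  continuous_iff_continuousAt.mpr fun τ => (G.exp_dirOp_hasDerivAt s v x τ).continuousAt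

lemma le_of_hasDerivAt_nonneg {φ ψ : ℝ → ℝ} {a b : ℝ} (hab : a ≤ b)
    (hd : ∀ σ ∈ Set.Icc a b, HasDerivAt φ (ψ σ) σ) (h0 : ∀ σ ∈ Set.Icc a b, 0 ≤ ψ σ) :
    φ a ≤ φ b := by
  have hmono := monotoneOn_of_deriv_nonneg (convex_Icc a b)
    (fun σ hσ => (hd σ hσ).continuousAt.continuousWithinAt)
    (fun σ hσ => (hd σ (interior_subset hσ)).differentiableAt.differentiableWithinAt)
    (fun σ hσ => by
      rw [(hd σ (interior_subset hσ)).deriv]; exact h0 σ (interior_subset hσ))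
  exact hmono (Set.left_mem_Icc.mpr hab) (Set.right_mem_Icc.mpr hab) hab

lemma exp_dirOp_le_of_supersol (s : Finset V) (t : ℝ) (ht : 0 ≤ t)
    (w w' : ℝ → {x // x ∈ s} → ℝ)
    (hd : ∀ σ ∈ Set.Icc (0:ℝ) t, ∀ i, HasDerivAt (fun τ => w τ i) (w' σ i) σ)
    (hss : ∀ σ ∈ Set.Icc (0:ℝ) t, ∀ i, (G.dirOp s) (w σ) i ≤ w' σ i) (i : {x // x ∈ s}) :
    NormedSpace.exp (t • G.dirOp s) (w 0) i ≤ w t i := by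
  set A := G.dirOp s with hA
  have key : ∀ σ ∈ Set.Icc (0:ℝ) t,
      HasDerivAt (fun τ => NormedSpace.exp ((t - τ) • A) (w τ) i)
        (NormedSpace.exp ((t - σ) • A) (w' σ - A (w σ)) i) σ := by
    intro σ hσ
    have houter := hasDerivAt_exp_smul_const (𝕂 := ℝ) A (t - σ)
    have hinner : HasDerivAt (fun τ : ℝ => t - τ) (-1) σ := by
      simpa using (hasDerivAt_id σ).const_sub t
    have hc := houter.scomp σ hinner
    have hw : HasDerivAt (fun τ => w τ) (w' σ) σ := hasDerivAt_pi.mpr (hd σ hσ)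
    have happ := hc.clm_apply hw
    have hcoord := hasDerivAt_pi.mp happ i
    refine hcoord.congr_deriv ?_
    simp only [map_sub, ContinuousLinearMap.smul_apply, ContinuousLinearMap.mul_apply,
      Pi.sub_apply, Pi.add_apply, Pi.smul_apply, Pi.neg_apply, smul_eq_mul,
      ContinuousLinearMap.add_apply, neg_smul, one_smul, ContinuousLinearMap.neg_apply,
      Function.comp]
    ring
  have hpos : ∀ σ ∈ Set.Icc (0:ℝ) t,
      0 ≤ NormedSpace.exp ((t - σ) • A) (w' σ - A (w σ)) i := by
    intro σ hσ
    exact G.exp_dirOp_nonneg s (t - σ) (by linarith [hσ.2]) _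
      (fun j => sub_nonneg.mpr (hss σ hσ j)) i
  have hle := le_of_hasDerivAt_nonneg ht key hpos
  simpa [sub_self, zero_smul, NormedSpace.exp_zero, ContinuousLinearMap.one_apply] using hle

lemma le_exp_dirOp_of_subsol (s : Finset V) (t : ℝ) (ht : 0 ≤ t)
    (w w' : ℝ → {x // x ∈ s} → ℝ)
    (hd : ∀ σ ∈ Set.Icc (0:ℝ) t, ∀ i, HasDerivAt (fun τ => w τ i) (w' σ i) σ)
    (hss : ∀ σ ∈ Set.Icc (0:ℝ) t, ∀ i, w' σ i ≤ (G.dirOp s) (w σ) i) (i : {x // x ∈ s}) :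
    w t i ≤ NormedSpace.exp (t • G.dirOp s) (w 0) i := by
  have h := G.exp_dirOp_le_of_supersol s t ht (fun σ => -(w σ)) (fun σ => -(w' σ))
    (fun σ hσ j => by exact (hd σ hσ j).neg)
    (fun σ hσ j => by
      simp only [map_neg, Pi.neg_apply, neg_le_neg_iff]
      exact hss σ hσ j) i
  rw [map_neg] at h
  simp only [Pi.neg_apply, neg_le_neg_iff] at h
  exact h


lemma finsum_w_mul (x : V) (F : V → ℝ) :
    (∑ᶠ y, G.w x y * F y) = ∑ y ∈ G.nbr x, G.w x y * F y := by
  apply finsum_eq_finset_sum_of_support_subset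
  intro y hy
  rw [Finset.mem_coe, mem_nbr]
  intro h
  apply hy
  simp [Function.mem_support, h]

lemma lap_eq_diff (F : V → ℝ) (x : V) :
    G.lap F x = (∑ y ∈ G.nbr x, G.w x y * (F y - F x)) / G.m x := by
  unfold lap
  rw [G.finsum_w_mul x (fun y => F y - F x)]

lemma lap_eq (F : V → ℝ) (x : V) :
    G.lap F x = ((∑ y ∈ G.nbr x, G.w x y * F y) - G.degS x * F x) / G.m x := by
  rw [lap_eq_diff]
  congr 1
  calc (∑ y ∈ G.nbr x, G.w x y * (F y - F x))
      = ∑ y ∈ G.nbr x, (G.w x y * F y - G.w x y * F x) :=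
        Finset.sum_congr rfl fun y _ => by ring
    _ = (∑ y ∈ G.nbr x, G.w x y * F y) - ∑ y ∈ G.nbr x, G.w x y * F x :=
        Finset.sum_sub_distrib _ _
    _ = (∑ y ∈ G.nbr x, G.w x y * F y) - G.degS x * F x := by rw [degS, Finset.sum_mul]

lemma sum_subtype_le (s : Finset V) (x : V) (F : V → ℝ) (hF : ∀ y, 0 ≤ F y) :
    (∑ y : {y // y ∈ s}, G.w x y.1 * F y.1) ≤ ∑ y ∈ G.nbr x, G.w x y * F y := by
  classical
  rw [Finset.sum_coe_sort s (fun y => G.w x y * F y)]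
  have h1 : (∑ y ∈ s, G.w x y * F y) = ∑ y ∈ s ∩ G.nbr x, G.w x y * F y := by
    apply (Finset.sum_subset (Finset.inter_subset_left)
      (fun y hy hyn => ?_)).symm
    have : G.w x y = 0 := by
      by_contra hw
      exact hyn (Finset.mem_inter.mpr ⟨hy, (G.mem_nbr).mpr hw⟩)
    rw [this, zero_mul]
  rw [h1]
  exact Finset.sum_le_sum_of_subset_of_nonneg (Finset.inter_subset_right)
    (fun y _ _ => mul_nonneg (G.nonneg x y) (hF y))

lemma abs_lap_le (F : V → ℝ) (x : V) (C : ℝ) (h0 : ∀ y, 0 ≤ F y) (hC : ∀ y, F y ≤ C) :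
    |G.lap F x| ≤ G.degS x * C / G.m x := by
  have hm := G.mpos x
  rw [lap_eq_diff, abs_div, abs_of_pos hm]
  apply div_le_div_aux _ _ _ ?_ hm
  calc |∑ y ∈ G.nbr x, G.w x y * (F y - F x)| ≤ ∑ y ∈ G.nbr x, |G.w x y * (F y - F x)| :=
        Finset.abs_sum_le_sum_abs _ _
    _ ≤ ∑ y ∈ G.nbr x, G.w x y * C := by
        apply Finset.sum_le_sum
        intro y _
        rw [abs_mul, abs_of_nonneg (G.nonneg x y)]
        apply mul_le_mul_of_nonneg_left ?_ (G.nonneg x y)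
        rw [abs_sub_le_iff]
        constructor
        · linarith [hC y, h0 x]
        · linarith [hC x, h0 y]
    _ = G.degS x * C := by rw [degS, Finset.sum_mul]

lemma lap_min_le (f : V → ℝ) (lam C : ℝ) (hf0 : ∀ y, 0 ≤ f y) (hC : 0 ≤ C) (hlam : 0 ≤ lam)
    (hsub : ∀ x, G.lap f x ≤ lam * f x) (x : V) :
    G.lap (fun y => min (f y) C) x ≤ lam * min (f x) C := by
  have hm := G.mpos x
  by_cases hx : f x ≤ C
  · have hmin : min (f x) C = f x := min_eq_left hx
    rw [hmin]
    calc G.lap (fun y => min (f y) C) x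
        ≤ G.lap f x := by
          rw [lap_eq_diff, lap_eq_diff]
          apply div_le_div_aux _ _ _ ?_ hm
          apply Finset.sum_le_sum
          intro y _
          apply mul_le_mul_of_nonneg_left ?_ (G.nonneg x y)
          simp only [hmin]
          have := min_le_left (f y) C
          linarith
      _ ≤ lam * f x := hsub x
  · have hmin : min (f x) C = C := min_eq_right (le_of_not_ge hx)
    rw [hmin]
    have : G.lap (fun y => min (f y) C) x ≤ 0 := by
      rw [lap_eq_diff]
      apply div_nonpos_of_nonpos_of_nonneg ?_ hm.le
      apply Finset.sum_nonpos
      intro y _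
      apply mul_nonpos_of_nonneg_of_nonpos (G.nonneg x y)
      simp only [hmin]
      have := min_le_right (f y) C
      linarith
    calc G.lap (fun y => min (f y) C) x ≤ 0 := this
      _ ≤ lam * C := mul_nonneg hlam hC


noncomputable def usol (s : Finset V) (g : V → ℝ) (t : ℝ) (x : V) : ℝ :=
  if hx : x ∈ s then
    NormedSpace.exp (t • G.dirOp s) (fun y : {x // x ∈ s} => g y.1) ⟨x, hx⟩
  else 0

lemma usol_of_mem (s : Finset V) (g : V → ℝ) (t : ℝ) {x : V} (hx : x ∈ s) :
    G.usol s g t x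
      = NormedSpace.exp (t • G.dirOp s) (fun y : {x // x ∈ s} => g y.1) ⟨x, hx⟩ := by
  rw [usol, dif_pos hx]

lemma usol_of_not_mem (s : Finset V) (g : V → ℝ) (t : ℝ) {x : V} (hx : x ∉ s) :
    G.usol s g t x = 0 := by
  rw [usol, dif_neg hx]

lemma usol_zero (s : Finset V) (g : V → ℝ) (x : V) :
    G.usol s g 0 x = if x ∈ s then g x else 0 := by
  by_cases hx : x ∈ s
  · rw [G.usol_of_mem s g 0 hx, if_pos hx]
    simp [NormedSpace.exp_zero]
  · rw [G.usol_of_not_mem s g 0 hx, if_neg hx]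

lemma usol_nonneg (s : Finset V) (g : V → ℝ) (t : ℝ) (ht : 0 ≤ t)
    (hg : ∀ y, 0 ≤ g y) (x : V) : 0 ≤ G.usol s g t x := by
  by_cases hx : x ∈ s
  · rw [G.usol_of_mem s g t hx]
    exact G.exp_dirOp_nonneg s t ht _ (fun y => hg y.1) _
  · rw [G.usol_of_not_mem s g t hx]

lemma usol_continuous (s : Finset V) (g : V → ℝ) (x : V) :
    Continuous (fun t : ℝ => G.usol s g t x) := by
  by_cases hx : x ∈ s
  · have : (fun t : ℝ => G.usol s g t x)
        = fun t : ℝ => NormedSpace.exp (t • G.dirOp s)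
            (fun y : {x // x ∈ s} => g y.1) ⟨x, hx⟩ := by
      funext t; exact G.usol_of_mem s g t hx
    rw [this]
    exact G.exp_dirOp_continuous s _ _
  · have : (fun t : ℝ => G.usol s g t x) = fun _ => 0 := by
      funext t; exact G.usol_of_not_mem s g t hx
    rw [this]
    exact continuous_const

lemma usol_le_const (s : Finset V) (g : V → ℝ) (t : ℝ) (ht : 0 ≤ t) (C : ℝ)
    (hg0 : ∀ y, 0 ≤ g y) (hgC : ∀ y, g y ≤ C) (hC : 0 ≤ C) (x : V) :
    G.usol s g t x ≤ C := by
  by_cases hx : x ∈ s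
  · rw [G.usol_of_mem s g t hx]
    have hmono := G.exp_dirOp_mono s t ht (fun y : {x // x ∈ s} => g y.1)
      (fun _ => C) (fun y => hgC y.1) ⟨x, hx⟩
    refine hmono.trans ?_
    have hsup := G.exp_dirOp_le_of_supersol s t ht (fun _ _ => C) (fun _ _ => 0)
      (fun σ _ i => hasDerivAt_const σ C) ?_ ⟨x, hx⟩
    · exact hsup
    · intro σ _ i
      rw [dirOp_apply]
      apply div_nonpos_of_nonpos_of_nonneg ?_ (G.mpos i.1).le
      rw [sub_nonpos]
      have := G.sum_subtype_le s i.1 (fun _ => 1) (fun _ => zero_le_one)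
      simp only [mul_one] at this
      calc (∑ y : {y // y ∈ s}, G.w i.1 y.1 * C)
          = (∑ y : {y // y ∈ s}, G.w i.1 y.1) * C := by rw [Finset.sum_mul]
        _ ≤ G.degS i.1 * C := mul_le_mul_of_nonneg_right (by simpa [degS] using this) hC
  · rw [G.usol_of_not_mem s g t hx]; exact hC

lemma dirOp_restr_le_of_lap (s : Finset V) (h : V → ℝ) (lam : ℝ) (hh0 : ∀ y, 0 ≤ h y)
    (hlap : ∀ x, G.lap h x ≤ lam * h x) (i : {x // x ∈ s}) :
    (G.dirOp s) (fun y : {x // x ∈ s} => h y.1) i ≤ lam * h i.1 := by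
  rw [dirOp_apply]
  calc ((∑ y : {x // x ∈ s}, G.w i.1 y.1 * h y.1) - G.degS i.1 * h i.1) / G.m i.1
      ≤ ((∑ y ∈ G.nbr i.1, G.w i.1 y * h y) - G.degS i.1 * h i.1) / G.m i.1 := by
        apply div_le_div_aux _ _ _ ?_ (G.mpos i.1)
        have := G.sum_subtype_le s i.1 h hh0
        linarith
    _ = G.lap h i.1 := (G.lap_eq h i.1).symm
    _ ≤ lam * h i.1 := hlap i.1

lemma usol_le_exp_mul (s : Finset V) (g : V → ℝ) (t : ℝ) (ht : 0 ≤ t)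
    (h : V → ℝ) (lam : ℝ) (hg0 : ∀ y, 0 ≤ g y) (hgh : ∀ y, g y ≤ h y) (hh0 : ∀ y, 0 ≤ h y)
    (hlap : ∀ x, G.lap h x ≤ lam * h x) (x : V) :
    G.usol s g t x ≤ Real.exp (lam * t) * h x := by
  by_cases hx : x ∈ s
  · rw [G.usol_of_mem s g t hx]
    have hmono := G.exp_dirOp_mono s t ht (fun y : {x // x ∈ s} => g y.1)
      (fun y : {x // x ∈ s} => h y.1) (fun y => hgh y.1) ⟨x, hx⟩
    refine hmono.trans ?_
    have hsup := G.exp_dirOp_le_of_supersol s t ht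
      (fun σ (y : {x // x ∈ s}) => Real.exp (lam * σ) * h y.1)
      (fun σ (y : {x // x ∈ s}) => lam * Real.exp (lam * σ) * h y.1) ?_ ?_ ⟨x, hx⟩
    · have h0 : (fun y : {x // x ∈ s} => Real.exp (lam * 0) * h y.1)
          = fun y : {x // x ∈ s} => h y.1 := by
        funext y; simp
      rw [h0] at hsup
      exact hsup
    · intro σ _ i
      have h1 : HasDerivAt (fun τ : ℝ => lam * τ) lam σ := by
        simpa using (hasDerivAt_id σ).const_mul lam
      have h2 : HasDerivAt (fun τ : ℝ => Real.exp (lam * τ)) (Real.exp (lam * σ) * lam) σ :=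
        (Real.hasDerivAt_exp (lam * σ)).comp σ h1
      have h3 := h2.mul_const (h i.1)
      refine h3.congr_deriv ?_
      ring
    · intro σ hσ i
      show (G.dirOp s) (fun y : {x // x ∈ s} => Real.exp (lam * σ) * h y.1) i
        ≤ lam * Real.exp (lam * σ) * h i.1
      have hsm : (fun y : {x // x ∈ s} => Real.exp (lam * σ) * h y.1)
          = Real.exp (lam * σ) • (fun y : {x // x ∈ s} => h y.1) := by
        funext y; simp
      rw [hsm, map_smul]
      simp only [Pi.smul_apply, smul_eq_mul]
      have := G.dirOp_restr_le_of_lap s h lam hh0 hlap i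
      have hexp := Real.exp_pos (lam * σ)
      nlinarith
  · rw [G.usol_of_not_mem s g t hx]
    exact mul_nonneg (Real.exp_nonneg _) (hh0 x)

lemma sum_subtype_eq (s : Finset V) (F : V → ℝ) :
    (∑ y : {y // y ∈ s}, F y.1) = ∑ y ∈ s, F y :=
  Finset.sum_coe_sort s F

noncomputable def usolD (s : Finset V) (g : V → ℝ) (σ : ℝ) (x : V) : ℝ :=
  if hx : x ∈ s then
    (G.dirOp s) (NormedSpace.exp (σ • G.dirOp s) (fun y : {x // x ∈ s} => g y.1)) ⟨x, hx⟩
  else 0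

lemma usolD_of_mem (s : Finset V) (g : V → ℝ) (σ : ℝ) {x : V} (hx : x ∈ s) :
    G.usolD s g σ x = (G.dirOp s)
      (NormedSpace.exp (σ • G.dirOp s) (fun y : {x // x ∈ s} => g y.1)) ⟨x, hx⟩ := by
  rw [usolD, dif_pos hx]

lemma usolD_of_not_mem (s : Finset V) (g : V → ℝ) (σ : ℝ) {x : V} (hx : x ∉ s) :
    G.usolD s g σ x = 0 := by
  rw [usolD, dif_neg hx]

lemma usol_mono_set (s s' : Finset V) (hss' : s ⊆ s') (g : V → ℝ) (t : ℝ) (ht : 0 ≤ t)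
    (hg0 : ∀ y, 0 ≤ g y) (x : V) :
    G.usol s g t x ≤ G.usol s' g t x := by
  by_cases hx' : x ∈ s'
  · have hd : ∀ σ ∈ Set.Icc (0:ℝ) t, ∀ i : {x // x ∈ s'},
        HasDerivAt (fun τ => G.usol s g τ i.1) (G.usolD s g σ i.1) σ := by
      intro σ _ i
      by_cases hi : i.1 ∈ s
      · have h1 : (fun τ => G.usol s g τ i.1)
            = fun τ => NormedSpace.exp (τ • G.dirOp s)
                (fun y : {x // x ∈ s} => g y.1) ⟨i.1, hi⟩ := by
          funext τ; exact G.usol_of_mem s g τ hi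
        rw [G.usolD_of_mem s g σ hi, h1]
        exact G.exp_dirOp_hasDerivAt s _ _ σ
      · have h1 : (fun τ => G.usol s g τ i.1) = fun _ => 0 := by
          funext τ; exact G.usol_of_not_mem s g τ hi
        rw [G.usolD_of_not_mem s g σ hi, h1]
        exact hasDerivAt_const σ 0
    have hss : ∀ σ ∈ Set.Icc (0:ℝ) t, ∀ i : {x // x ∈ s'},
        G.usolD s g σ i.1 ≤ (G.dirOp s') (fun j : {x // x ∈ s'} => G.usol s g σ j.1) i := by
      intro σ hσ i
      have hσ0 : 0 ≤ σ := hσ.1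
      have husol_nonneg : ∀ y : V, 0 ≤ G.usol s g σ y := G.usol_nonneg s g σ hσ0 hg0
      by_cases hi : i.1 ∈ s
      · rw [G.usolD_of_mem s g σ hi, dirOp_apply, dirOp_apply]
        apply div_le_div_aux _ _ _ ?_ (G.mpos i.1)
        have hvi : NormedSpace.exp (σ • G.dirOp s) (fun y : {x // x ∈ s} => g y.1) ⟨i.1, hi⟩
            = G.usol s g σ i.1 := (G.usol_of_mem s g σ hi).symm
        have hsum : (∑ y : {x // x ∈ s},
              G.w i.1 y.1 * NormedSpace.exp (σ • G.dirOp s) (fun z : {x // x ∈ s} => g z.1) y)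
            ≤ ∑ y : {x // x ∈ s'}, G.w i.1 y.1 * G.usol s g σ y.1 := by
          have e1 : (∑ y : {x // x ∈ s},
                G.w i.1 y.1 * NormedSpace.exp (σ • G.dirOp s) (fun z : {x // x ∈ s} => g z.1) y)
              = ∑ y : {x // x ∈ s}, G.w i.1 y.1 * G.usol s g σ y.1 := by
            apply Finset.sum_congr rfl
            intro y _
            rw [G.usol_of_mem s g σ y.2]
          rw [e1, sum_subtype_eq s (fun y => G.w i.1 y * G.usol s g σ y),
            sum_subtype_eq s' (fun y => G.w i.1 y * G.usol s g σ y)]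
          exact Finset.sum_le_sum_of_subset_of_nonneg hss'
            (fun y _ _ => mul_nonneg (G.nonneg i.1 y) (husol_nonneg y))
        rw [hvi]
        linarith [hsum]
      · rw [G.usolD_of_not_mem s g σ hi, dirOp_apply]
        apply div_nonneg ?_ (G.mpos i.1).le
        have h0i : G.usol s g σ i.1 = 0 := G.usol_of_not_mem s g σ hi
        rw [h0i, mul_zero, sub_zero]
        exact Finset.sum_nonneg fun y _ => mul_nonneg (G.nonneg i.1 y.1) (husol_nonneg y.1)
    have hfin := G.le_exp_dirOp_of_subsol s' t ht
      (fun σ (i : {x // x ∈ s'}) => G.usol s g σ i.1)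
      (fun σ (i : {x // x ∈ s'}) => G.usolD s g σ i.1)
      (fun σ hσ i => hd σ hσ i) (fun σ hσ i => hss σ hσ i) ⟨x, hx'⟩
    have h0 : ∀ i : {x // x ∈ s'}, G.usol s g 0 i.1 ≤ g i.1 := by
      intro i
      rw [G.usol_zero]
      split
      · exact le_refl _
      · exact hg0 i.1
    have hmono := G.exp_dirOp_mono s' t ht (fun i : {x // x ∈ s'} => G.usol s g 0 i.1)
      (fun y : {x // x ∈ s'} => g y.1) h0 ⟨x, hx'⟩
    rw [G.usol_of_mem s' g t hx']
    exact hfin.trans hmono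
  · have hx : x ∉ s := fun hx => hx' (hss' hx)
    rw [G.usol_of_not_mem s g t hx, G.usol_of_not_mem s' g t hx']

lemma usol_hasDerivAt_lap (s : Finset V) (g : V → ℝ) (t : ℝ) {x : V}
    (hx : x ∈ s) (hnbr : G.nbr x ⊆ s) :
    HasDerivAt (fun τ => G.usol s g τ x) (G.lap (G.usol s g t) x) t := by
  have h1 : (fun τ => G.usol s g τ x)
      = fun τ => NormedSpace.exp (τ • G.dirOp s) (fun y : {x // x ∈ s} => g y.1) ⟨x, hx⟩ := by
    funext τ; exact G.usol_of_mem s g τ hx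
  rw [h1]
  have hder := G.exp_dirOp_hasDerivAt s (fun y : {x // x ∈ s} => g y.1) ⟨x, hx⟩ t
  have hval : (G.dirOp s) (NormedSpace.exp (t • G.dirOp s)
      (fun y : {x // x ∈ s} => g y.1)) ⟨x, hx⟩ = G.lap (G.usol s g t) x := by
    rw [dirOp_apply, G.lap_eq (G.usol s g t) x]
    dsimp only
    congr 1
    congr 1
    · have e1 : (∑ y : {x // x ∈ s},
          G.w x y.1 * NormedSpace.exp (t • G.dirOp s) (fun z : {x // x ∈ s} => g z.1) y)
        = ∑ y : {x // x ∈ s}, G.w x y.1 * G.usol s g t y.1 := by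
        apply Finset.sum_congr rfl
        intro y _
        rw [G.usol_of_mem s g t y.2]
      rw [sum_subtype_eq s (fun y => G.w x y * G.usol s g t y)] at e1
      rw [e1]
      apply (Finset.sum_subset hnbr ?_).symm
      intro y _ hyn
      have : G.w x y = 0 := by
        by_contra hw
        exact hyn ((G.mem_nbr).mpr hw)
      rw [this, zero_mul]
    · rw [G.usol_of_mem s g t hx]
  rw [← hval]
  exact hder

end WeightedGraph

/-- `u` is a non-negative bounded solution of the heat equation with initial datum `f`. -/
def IsHeatSolution {V : Type} (G : WeightedGraph V) (f : V → ℝ) (u : ℝ → V → ℝ) : Prop :=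
  u 0 = f ∧ (∀ t x, 0 ≤ t → 0 ≤ u t x) ∧ (∃ C, ∀ t x, 0 ≤ t → u t x ≤ C) ∧
  ∀ x t, 0 ≤ t → HasDerivWithinAt (fun s => u s x) (G.lap (u t) x) (Set.Ici 0) t

/-- `P` is the minimal heat semigroup: for every non-negative bounded `f`, `t ↦ P t f` is the
smallest non-negative bounded solution of the heat equation with initial datum `f`; on signed
bounded functions it is given by linearity from the positive and negative parts. -/
def IsHeatSemigroup {V : Type} (G : WeightedGraph V) (P : ℝ → (V → ℝ) → V → ℝ) : Prop :=
  (∀ f : V → ℝ, (∀ x, 0 ≤ f x) → (∃ C, ∀ x, f x ≤ C) →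
    IsHeatSolution G f (fun t => P t f) ∧
    ∀ u, IsHeatSolution G f u → ∀ t x, 0 ≤ t → P t f x ≤ u t x) ∧
  (∀ f : V → ℝ, (∃ C, ∀ x, |f x| ≤ C) → ∀ t x,
    P t f x = P t (fun y => max (f y) 0) x - P t (fun y => max (-f y) 0) x)

theorem exists_heat_solution_le {V : Type} [Countable V] [Nonempty V] (G : WeightedGraph V)
    (g h : V → ℝ) (C lam : ℝ)
    (hg0 : ∀ y, 0 ≤ g y) (hgh : ∀ y, g y ≤ h y) (hh0 : ∀ y, 0 ≤ h y) (hhC : ∀ y, h y ≤ C)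
    (hC : 0 ≤ C) (hlam : 0 ≤ lam) (hlap : ∀ x, G.lap h x ≤ lam * h x) :
    ∃ u : ℝ → V → ℝ, IsHeatSolution G g u ∧
      ∀ t x, 0 ≤ t → u t x ≤ Real.exp (lam * t) * h x := by
  classical
  obtain ⟨e, he⟩ := exists_surjective_nat V
  set s : ℕ → Finset V := fun n => (Finset.range (n + 1)).image e with hs
  have hsmono : ∀ {a b : ℕ}, a ≤ b → s a ⊆ s b := by
    intro a b hab
    exact Finset.image_subset_image (Finset.range_subset_range.mpr (by omega))
  have hcov : ∀ T : Finset V, ∃ N, ∀ n, N ≤ n → T ⊆ s n := by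
    intro T
    have hidx : ∀ y : V, ∃ k, e k = y := fun y => he y
    choose idx hidx using hidx
    refine ⟨T.sup idx, fun n hn y hy => ?_⟩
    have : idx y ≤ n := le_trans (Finset.le_sup hy) hn
    exact Finset.mem_image.mpr ⟨idx y, Finset.mem_range.mpr (by omega), hidx y⟩
  have hgC : ∀ y, g y ≤ C := fun y => (hgh y).trans (hhC y)
  set u : ℝ → V → ℝ := fun t x => ⨆ n, G.usol (s n) g (max t 0) x with hu
  have hmax0 : ∀ t : ℝ, (0:ℝ) ≤ max t 0 := fun t => le_max_right t 0
  have hmono_n : ∀ (t : ℝ) (x : V), Monotone fun n => G.usol (s n) g (max t 0) x := by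
    intro t x n m hnm
    exact G.usol_mono_set (s n) (s m) (hsmono hnm) g (max t 0) (hmax0 t) hg0 x
  have hbddC : ∀ (n : ℕ) (t : ℝ) (x : V), G.usol (s n) g (max t 0) x ≤ C := by
    intro n t x
    exact G.usol_le_const (s n) g (max t 0) (hmax0 t) C hg0 hgC hC x
  have hbdd : ∀ (t : ℝ) (x : V), BddAbove (Set.range fun n => G.usol (s n) g (max t 0) x) :=
    fun t x => ⟨C, Set.forall_mem_range.mpr fun n => hbddC n t x⟩
  have htend : ∀ (t : ℝ) (x : V),
      Filter.Tendsto (fun n => G.usol (s n) g (max t 0) x) Filter.atTop (nhds (u t x)) :=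
    fun t x => tendsto_atTop_ciSup (hmono_n t x) (hbdd t x)
  have htend' : ∀ (t : ℝ), 0 ≤ t → ∀ (x : V),
      Filter.Tendsto (fun n => G.usol (s n) g t x) Filter.atTop (nhds (u t x)) := by
    intro t ht x
    have h1 := htend t x
    rwa [max_eq_left ht] at h1
  have hu_nonneg : ∀ t x, 0 ≤ u t x := by
    intro t x
    have h1 := G.usol_nonneg (s 0) g (max t 0) (hmax0 t) hg0 x
    exact h1.trans (le_ciSup (hbdd t x) 0)
  have hu_leC : ∀ t x, u t x ≤ C := fun t x => ciSup_le fun n => hbddC n t x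
  have hu_le_exp : ∀ t x, u t x ≤ Real.exp (lam * max t 0) * h x := by
    intro t x
    exact ciSup_le fun n =>
      G.usol_le_exp_mul (s n) g (max t 0) (hmax0 t) h lam hg0 hgh hh0 hlap x
  have hu_shift : ∀ t x, u t x = u (max t 0) x := by
    intro t x
    have hmm : max (max t 0) 0 = max t 0 := max_eq_left (hmax0 t)
    simp only [hu, hmm]
  have hu0 : ∀ x, u 0 x = g x := by
    intro x
    apply le_antisymm
    · apply ciSup_le
      intro n
      rw [show max (0:ℝ) 0 = 0 from max_self 0, G.usol_zero]
      split
      · exact le_refl _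
      · exact hg0 x
    · obtain ⟨N, hN⟩ := hcov {x}
      have hxN : x ∈ s N := hN N le_rfl (Finset.mem_singleton_self x)
      have hval : G.usol (s N) g (max 0 0) x = g x := by
        rw [max_self, G.usol_zero, if_pos hxN]
      calc g x = G.usol (s N) g (max 0 0) x := hval.symm
        _ ≤ u 0 x := le_ciSup (hbdd 0 x) N
  -- key integral equation and integrability, for each vertex
  have hkey : ∀ x : V,
      (∀ t : ℝ, 0 ≤ t →
        IntervalIntegrable (fun σ => G.lap (u σ) x) MeasureTheory.volume 0 t)
      ∧ (∀ t : ℝ, 0 ≤ t → u t x = g x + ∫ σ in (0:ℝ)..t, G.lap (u σ) x) := by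
    intro x
    obtain ⟨N, hN⟩ := hcov (insert x (G.nbr x))
    have hxmem : ∀ n, N ≤ n → x ∈ s n := fun n hn => hN n hn (Finset.mem_insert_self x _)
    have hnbrmem : ∀ n, N ≤ n → G.nbr x ⊆ s n :=
      fun n hn y hy => hN n hn (Finset.mem_insert_of_mem hy)
    have hFn_cont : ∀ n : ℕ, Continuous fun σ => G.lap (G.usol (s n) g σ) x := by
      intro n
      have e1 : (fun σ => G.lap (G.usol (s n) g σ) x)
          = fun σ => (∑ y ∈ G.nbr x,
              G.w x y * (G.usol (s n) g σ y - G.usol (s n) g σ x)) / G.m x :=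
        funext fun σ => G.lap_eq_diff _ x
      rw [e1]
      exact (continuous_finset_sum _ fun y _ => continuous_const.mul
        ((G.usol_continuous (s n) g y).sub (G.usol_continuous (s n) g x))).div_const _
    have hFn_tend : ∀ σ : ℝ, 0 ≤ σ →
        Filter.Tendsto (fun n => G.lap (G.usol (s n) g σ) x) Filter.atTop
          (nhds (G.lap (u σ) x)) := by
      intro σ hσ
      have hsum : Filter.Tendsto (fun n => (∑ y ∈ G.nbr x,
            G.w x y * (G.usol (s n) g σ y - G.usol (s n) g σ x)) / G.m x) Filter.atTop
          (nhds ((∑ y ∈ G.nbr x, G.w x y * (u σ y - u σ x)) / G.m x)) := by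
        apply Filter.Tendsto.div_const
        apply tendsto_finset_sum
        intro y _
        exact tendsto_const_nhds.mul ((htend' σ hσ y).sub (htend' σ hσ x))
      have e1 : (fun n => G.lap (G.usol (s n) g σ) x)
          = fun n => (∑ y ∈ G.nbr x,
              G.w x y * (G.usol (s n) g σ y - G.usol (s n) g σ x)) / G.m x :=
        funext fun n => G.lap_eq_diff _ x
      rw [e1, G.lap_eq_diff (u σ) x]
      exact hsum
    have habsn : ∀ (n : ℕ) (σ : ℝ), 0 ≤ σ →
        |G.lap (G.usol (s n) g σ) x| ≤ G.degS x * C / G.m x := by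
      intro n σ hσ
      exact G.abs_lap_le _ x C (G.usol_nonneg (s n) g σ hσ hg0)
        (G.usol_le_const (s n) g σ hσ C hg0 hgC hC)
    have habs : ∀ σ : ℝ, |G.lap (u σ) x| ≤ G.degS x * C / G.m x := by
      intro σ
      exact G.abs_lap_le _ x C (fun y => hu_nonneg σ y) (fun y => hu_leC σ y)
    constructor
    · intro t ht
      rw [intervalIntegrable_iff, Set.uIoc_of_le ht]
      apply MeasureTheory.Integrable.mono'
        (MeasureTheory.integrableOn_const (C := G.degS x * C / G.m x) measure_Ioc_lt_top.ne)
      · apply aestronglyMeasurable_of_tendsto_ae Filter.atTop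
          (fun n => (hFn_cont n).aestronglyMeasurable)
        apply (MeasureTheory.ae_restrict_iff' measurableSet_Ioc).mpr
        apply MeasureTheory.ae_of_all
        intro σ hσ
        exact hFn_tend σ hσ.1.le
      · apply MeasureTheory.ae_of_all
        intro σ
        rw [Real.norm_eq_abs]
        exact habs σ
    · intro t ht
      have heqn : ∀ n, N ≤ n →
          G.usol (s n) g t x - g x = ∫ σ in (0:ℝ)..t, G.lap (G.usol (s n) g σ) x := by
        intro n hn
        have hders : ∀ σ ∈ Set.uIcc (0:ℝ) t,
            HasDerivAt (fun τ => G.usol (s n) g τ x) (G.lap (G.usol (s n) g σ) x) σ :=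
          fun σ _ => G.usol_hasDerivAt_lap (s n) g σ (hxmem n hn) (hnbrmem n hn)
        have hi := intervalIntegral.integral_eq_sub_of_hasDerivAt hders
          ((hFn_cont n).intervalIntegrable 0 t)
        rw [hi, G.usol_zero, if_pos (hxmem n hn)]
      have hLHS : Filter.Tendsto (fun n => G.usol (s n) g t x - g x) Filter.atTop
          (nhds (u t x - g x)) := (htend' t ht x).sub tendsto_const_nhds
      have hRHS : Filter.Tendsto (fun n => ∫ σ in (0:ℝ)..t, G.lap (G.usol (s n) g σ) x)
          Filter.atTop (nhds (∫ σ in (0:ℝ)..t, G.lap (u σ) x)) := by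
        apply intervalIntegral.tendsto_integral_filter_of_dominated_convergence
          (bound := fun _ => G.degS x * C / G.m x)
        · exact Filter.Eventually.of_forall fun n => (hFn_cont n).aestronglyMeasurable
        · apply Filter.Eventually.of_forall
          intro n
          apply MeasureTheory.ae_of_all
          intro σ hσ
          rw [Set.uIoc_of_le ht] at hσ
          rw [Real.norm_eq_abs]
          exact habsn n σ hσ.1.le
        · exact intervalIntegrable_const
        · apply MeasureTheory.ae_of_all
          intro σ hσ
          rw [Set.uIoc_of_le ht] at hσ
          exact hFn_tend σ hσ.1.le
      have heq' : (fun n => G.usol (s n) g t x - g x)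
          =ᶠ[Filter.atTop] fun n => ∫ σ in (0:ℝ)..t, G.lap (G.usol (s n) g σ) x :=
        Filter.eventually_atTop.mpr ⟨N, heqn⟩
      have huniq := tendsto_nhds_unique (hLHS.congr' heq') hRHS
      linarith
  -- Lipschitz continuity of t ↦ u t x on [0, ∞)
  have hucont : ∀ x : V, ContinuousOn (fun σ => u σ x) (Set.Ici (0:ℝ)) := by
    intro x
    set K : ℝ := G.degS x * C / G.m x with hK
    have hK0 : 0 ≤ K := div_nonneg (mul_nonneg (G.degS_nonneg x) hC) (G.mpos x).le
    have hlip : ∀ t₁ t₂ : ℝ, 0 ≤ t₁ → t₁ ≤ t₂ → |u t₂ x - u t₁ x| ≤ K * (t₂ - t₁) := by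
      intro t₁ t₂ ht₁ h12
      have ht₂ : 0 ≤ t₂ := ht₁.trans h12
      have hdiff : u t₂ x - u t₁ x = ∫ σ in t₁..t₂, G.lap (u σ) x := by
        rw [(hkey x).2 t₂ ht₂, (hkey x).2 t₁ ht₁]
        have := intervalIntegral.integral_interval_sub_left ((hkey x).1 t₂ ht₂)
          ((hkey x).1 t₁ ht₁)
        linarith [this]
      rw [hdiff]
      have hb := intervalIntegral.norm_integral_le_of_norm_le_const
        (C := K) (f := fun σ => G.lap (u σ) x) (a := t₁) (b := t₂) ?_
      · rw [Real.norm_eq_abs] at hb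
        calc |∫ σ in t₁..t₂, G.lap (u σ) x| ≤ K * |t₂ - t₁| := hb
          _ = K * (t₂ - t₁) := by rw [abs_of_nonneg (by linarith)]
      · intro σ _
        rw [Real.norm_eq_abs]
        exact G.abs_lap_le _ x C (fun y => hu_nonneg σ y) (fun y => hu_leC σ y)
    apply LipschitzOnWith.continuousOn (K := Real.toNNReal K)
    rw [lipschitzOnWith_iff_dist_le_mul]
    intro a ha b hb
    rw [Real.dist_eq, Real.dist_eq, Real.coe_toNNReal K hK0]
    rcases le_total b a with hba | hab
    · calc |u a x - u b x| ≤ K * (a - b) := hlip b a hb hba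
        _ = K * |a - b| := by rw [abs_of_nonneg (by linarith)]
    · calc |u a x - u b x| = |u b x - u a x| := abs_sub_comm _ _
        _ ≤ K * (b - a) := hlip a b ha hab
        _ = K * |a - b| := by rw [abs_sub_comm a b, abs_of_nonneg (by linarith)]
  -- continuity of the right-hand side of the heat equation
  have hFcont : ∀ x : V, Continuous fun σ => G.lap (u σ) x := by
    intro x
    have h1 : ContinuousOn (fun σ => G.lap (u σ) x) (Set.Ici (0:ℝ)) := by
      have e1 : (fun σ => G.lap (u σ) x)
          = fun σ => (∑ y ∈ G.nbr x, G.w x y * (u σ y - u σ x)) / G.m x :=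
        funext fun σ => G.lap_eq_diff _ x
      rw [e1]
      exact (continuousOn_finset_sum _ fun y _ => continuousOn_const.mul
        ((hucont y).sub (hucont x))).div_const _
    have h2 : Continuous fun σ : ℝ => G.lap (u (max σ 0)) x := by
      apply h1.comp_continuous (continuous_id.max continuous_const)
      intro σ
      exact Set.mem_Ici.mpr (le_max_right σ 0)
    have e2 : (fun σ => G.lap (u σ) x) = fun σ : ℝ => G.lap (u (max σ 0)) x := by
      funext σ
      have : u σ = u (max σ 0) := funext fun y => hu_shift σ y
      rw [this]
    rw [e2]
    exact h2
  -- the derivative property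
  have hderiv : ∀ (x : V) (t : ℝ), 0 ≤ t →
      HasDerivWithinAt (fun σ => u σ x) (G.lap (u t) x) (Set.Ici 0) t := by
    intro x t ht
    have hFTC := intervalIntegral.integral_hasDerivAt_right
      ((hFcont x).intervalIntegrable 0 t)
      ((hFcont x).stronglyMeasurableAtFilter _ _)
      ((hFcont x).continuousAt)
    have hadd := hFTC.const_add (g x)
    apply (hadd.hasDerivWithinAt).congr
    · intro σ hσ
      exact (hkey x).2 σ hσ
    · exact (hkey x).2 t ht
  refine ⟨u, ⟨funext hu0, fun t x _ => hu_nonneg t x, ⟨C, fun t x _ => hu_leC t x⟩,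
    fun x t ht => hderiv x t ht⟩, ?_⟩
  intro t x ht
  have h1 := hu_le_exp t x
  rwa [max_eq_left ht] at h1

/-- Subexponential growth of `λ`-subharmonic functions under the (extended) heat semigroup:
if `f ≥ 0` and `Δf ≤ λ f` with `λ > 0`, then `P_t f ≤ e^{λ t} f`, where
`P_t f := sup {P_t g : 0 ≤ g ≤ f, g bounded}`. -/
theorem stmt19 {V : Type} [Countable V] (G : WeightedGraph V)
    (P : ℝ → (V → ℝ) → V → ℝ) (hP : IsHeatSemigroup G P)
    (f : V → ℝ) (hf0 : ∀ x, 0 ≤ f x)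
    (lam : ℝ) (hlam : 0 < lam) (hsub : ∀ x, G.lap f x ≤ lam * f x) :
    ∀ t : ℝ, 0 ≤ t → ∀ x,
      sSup { c | ∃ g : V → ℝ, (∀ y, 0 ≤ g y) ∧ (∀ y, g y ≤ f y) ∧
          (∃ C, ∀ y, g y ≤ C) ∧ c = P t g x } ≤
        Real.exp (lam * t) * f x := by
  intro t ht x
  apply Real.sSup_le ?_ (mul_nonneg (Real.exp_nonneg _) (hf0 x))
  rintro c ⟨g, hg0, hgf, ⟨C0, hC0⟩, rfl⟩
  haveI : Nonempty V := ⟨x⟩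
  set C : ℝ := max C0 0 with hCdef
  have hC : 0 ≤ C := le_max_right C0 0
  have hgC : ∀ y, g y ≤ C := fun y => (hC0 y).trans (le_max_left C0 0)
  set h : V → ℝ := fun y => min (f y) C with hhdef
  have hgh : ∀ y, g y ≤ h y := fun y => le_min (hgf y) (hgC y)
  have hh0 : ∀ y, 0 ≤ h y := fun y => le_min (hf0 y) hC
  have hhC : ∀ y, h y ≤ C := fun y => min_le_right _ _
  have hlaph : ∀ z, G.lap h z ≤ lam * h z :=
    G.lap_min_le f lam C hf0 hC hlam.le hsub
  obtain ⟨u, hu, hub⟩ := exists_heat_solution_le G g h C lam hg0 hgh hh0 hhC hC hlam.le hlaph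
  have hmin := (hP.1 g hg0 ⟨C, hgC⟩).2 u hu t x ht
  calc P t g x ≤ u t x := hmin
    _ ≤ Real.exp (lam * t) * h x := hub t x ht
    _ ≤ Real.exp (lam * t) * f x :=
        mul_le_mul_of_nonneg_left (min_le_left _ _) (Real.exp_nonneg _)
end
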